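/- Let c : ℤ/(3k+1)ℤ × {0,1} → {1,2,3} be a coloring of the vertices a_i = (i,0) and b_i = (i,1) for i in ℤ/(3k+1)ℤ such that all of the following hold for every i: c(a_i) ≠ c(b_i), c(b_i) ≠ c(a_{i+1}), c(a_i) ≠ c(a_{i+1}), c(b_i) ≠ c(b_{i+1}), and in each triangle {a_i, b_i, a_{i+1}} and {b_i, a_{i+1}, b_{i+1}} the maximum color appears exactly once. Then all three vertices of each such triangle receive three distinct colors, and the color pattern along the sequence a_1, b_1, a_2, b_2, ... is periodic with period 3 in the index i; since 3 does not divide 3k+1, no such coloring c exists. -/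

import Mathlib

/-- The maximum of three values is attained at exactly one of them. -/
def UM3 (x y z : ℕ) : Prop :=
  (y < x ∧ z < x) ∨ (x < y ∧ z < y) ∨ (x < z ∧ y < z)

lemma third {x y w v : ℕ} (hx : 1 ≤ x ∧ x ≤ 3) (hy : 1 ≤ y ∧ y ≤ 3)
    (hw : 1 ≤ w ∧ w ≤ 3) (hv : 1 ≤ v ∧ v ≤ 3) (hxy : x ≠ y)
    (hwx : w ≠ x) (hwy : w ≠ y) (hvx : v ≠ x) (hvy : v ≠ y) : w = v := by
  omega

/-- For the ring of `3k+1` triangles (vertices `a i` and `b i`, indices cyclic),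
any coloring with colors in `{1,2,3}` that is proper and gives every triangle
`{a i, b i, a (i+1)}` and `{b i, a (i+1), b (i+1)}` the unique-maximum property
makes every such triangle rainbow and is periodic with period `3` in the index;
since `3 ∤ 3k+1`, no such coloring exists. -/
theorem stmt_5 (k : ℕ) (hk : 1 ≤ k) (a b : Fin (3 * k + 1) → ℕ)
    (ha : ∀ i, 1 ≤ a i ∧ a i ≤ 3) (hb : ∀ i, 1 ≤ b i ∧ b i ≤ 3)
    (pab : ∀ i, a i ≠ b i) (pba : ∀ i, b i ≠ a (i + 1))
    (paa : ∀ i, a i ≠ a (i + 1)) (pbb : ∀ i, b i ≠ b (i + 1))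
    (tri1 : ∀ i, UM3 (a i) (b i) (a (i + 1)))
    (tri2 : ∀ i, UM3 (b i) (a (i + 1)) (b (i + 1))) :
    (∀ i, a i ≠ b i ∧ b i ≠ a (i + 1) ∧ a i ≠ a (i + 1) ∧
        b i ≠ b (i + 1) ∧ b i ≠ a (i + 1) ∧ a (i + 1) ≠ b (i + 1)) ∧
    (∀ i, a (i + 3) = a i ∧ b (i + 3) = b i) ∧
    False := by
  -- b (i+1) = a i
  have hba : ∀ i, b (i + 1) = a i := fun i =>
    third (hb i) (ha (i + 1)) (hb (i + 1)) (ha i) (pba i)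
      (Ne.symm (pbb i)) (Ne.symm (pab (i + 1))) (pab i) (paa i)
  -- a (i+2) = b i
  have hab : ∀ i, a (i + 1 + 1) = b i := by
    intro i
    have := hba i
    exact third (ha (i + 1)) (hb (i + 1)) (ha (i + 1 + 1)) (hb i)
      (pab (i + 1)) (fun h => paa (i + 1) h.symm) (fun h => pba (i + 1) h.symm)
      (fun h => pba i h) (pbb i)
  have key : ∀ i, a (i + 3) = a i ∧ b (i + 3) = b i := by
    intro i
    have h3 : (3 : Fin (3 * k + 1)) = 1 + 1 + 1 := by open Fin.CommRing in norm_num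
    constructor
    · have : a (i + 3) = a (i + 1 + 1 + 1) := by rw [h3]; open Fin.CommRing in ring_nf
      rw [this]
      have := hba (i + 1)
      calc a (i + 1 + 1 + 1) = b (i + 1) := hab (i + 1)
        _ = a i := hba i
    · have : b (i + 3) = b (i + 1 + 1 + 1) := by rw [h3]; open Fin.CommRing in ring_nf
      rw [this]
      calc b (i + 1 + 1 + 1) = a (i + 1 + 1) := hba (i + 1 + 1)
        _ = b i := hab i
  refine ⟨fun i => ⟨pab i, pba i, paa i, pbb i, pba i, pab (i + 1)⟩, key, ?_⟩
  -- periodicity with period 3 implies constant since gcd(3, 3k+1) = 1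
  open Fin.CommRing in
  have hper : ∀ (m : ℕ) (i : Fin (3 * k + 1)), a (i + (3 * m : ℕ)) = a i := by
    intro m
    induction m with
    | zero => intro i; simp
    | succ n ih =>
      intro i
      have : ((3 * (n + 1) : ℕ) : Fin (3 * k + 1)) = ((3 * n : ℕ) : Fin (3 * k + 1)) + 3 := by
        push_cast; open Fin.CommRing in ring
      open Fin.CommRing in
      rw [this, ← add_assoc, (key (i + (3 * n : ℕ))).1, ih]
  open Fin.CommRing in
  have h1 : ((3 * (2 * k + 1) : ℕ) : Fin (3 * k + 1)) = 1 := by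
    have : (3 * (2 * k + 1) : ℕ) = 2 * (3 * k + 1) + 1 := by ring
    rw [this]
    rw [Nat.cast_add, Nat.cast_mul, Fin.natCast_self, mul_zero, zero_add, Nat.cast_one]
  have := hper (2 * k + 1) 0
  rw [h1] at this
  exact paa 0 this.symm
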